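/- arXiv:1305.0617 — 3 statements merged into one kernel-verified Lean document; each statement's English description precedes it below -/
import Mathlib

section
/- Let d ≥ 1 be an integer, let s ∈ (0,2], R > 0 and C₁ ≥ 0. Let g : ℝ^d → ℝ be measurable and suppose there exists a vector c ∈ ℝ^d such that |g(u) − g(0) − ⟨c, u⟩| ≤ C₁‖u‖^s for every u in the closed Euclidean ball B_R = {u ∈ ℝ^d : ‖u‖ ≤ R}. Then the constant M_{d,s} = (2π)^{−d/2} ∫_{ℝ^d} exp(−‖v‖²/2)‖v‖^s dv is finite, and for every a > 0, | (a/√(2π))^d ∫_{B_R} exp(−a²‖u‖²/2) (g(u) − g(0)) du | ≤ C₁ · M_{d,s} · a^{−s}. -/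
open MeasureTheory
open scoped RealInnerProductSpace

private lemma aux_pt (s t : ℝ) (hs0 : 0 < s) (hs2 : s ≤ 2) (ht : 0 ≤ t) :
    Real.exp (-t ^ 2 / 2) * t ^ s ≤ 5 * Real.exp (-(1/4) * t ^ 2) := by
  have h1 : t ^ s ≤ 1 + t ^ 2 := by
    rcases le_total t 1 with h | h
    · have := Real.rpow_le_one ht h hs0.le
      nlinarith [sq_nonneg t]
    · have h2 : t ^ s ≤ t ^ (2:ℝ) := Real.rpow_le_rpow_of_exponent_le h hs2
      rw [show (2:ℝ) = ((2:ℕ):ℝ) by norm_num, Real.rpow_natCast] at h2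
      nlinarith
  have hx := Real.add_one_le_exp (t ^ 2 / 4)
  have hep : (0:ℝ) < Real.exp (t ^ 2 / 4) := Real.exp_pos _
  have he : Real.exp (-(1/4) * t ^ 2) = (Real.exp (t ^ 2 / 4))⁻¹ := by
    rw [← Real.exp_neg]; ring_nf
  have h2 : t ^ 2 * Real.exp (-(1/4) * t ^ 2) ≤ 4 := by
    rw [he, mul_inv_le_iff₀ hep]; nlinarith
  have h3 : Real.exp (-(1/4) * t ^ 2) ≤ 1 := by
    rw [he, inv_le_one_iff₀]; right; nlinarith
  have hsplit : Real.exp (-t ^ 2 / 2)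
      = Real.exp (-(1/4) * t ^ 2) * Real.exp (-(1/4) * t ^ 2) := by
    rw [← Real.exp_add]; ring_nf
  have hts : 0 ≤ t ^ s := Real.rpow_nonneg ht _
  calc Real.exp (-t ^ 2 / 2) * t ^ s
      = Real.exp (-(1/4) * t ^ 2) * (Real.exp (-(1/4) * t ^ 2) * t ^ s) := by rw [hsplit]; ring
    _ ≤ Real.exp (-(1/4) * t ^ 2) * 5 := by
        refine mul_le_mul_of_nonneg_left ?_ (Real.exp_pos _).le
        calc Real.exp (-(1/4) * t ^ 2) * t ^ s
            ≤ Real.exp (-(1/4) * t ^ 2) * (1 + t ^ 2) :=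
              mul_le_mul_of_nonneg_left h1 (Real.exp_pos _).le
          _ ≤ 5 := by nlinarith
    _ = 5 * Real.exp (-(1/4) * t ^ 2) := by ring

private lemma aux_int (d : ℕ) (s : ℝ) (hs0 : 0 < s) (hs2 : s ≤ 2) :
    Integrable (fun v : EuclideanSpace ℝ (Fin d) =>
      Real.exp (-‖v‖ ^ 2 / 2) * ‖v‖ ^ s) := by
  have hg4 : Integrable (fun v : EuclideanSpace ℝ (Fin d) =>
      Real.exp (-(1/4) * ‖v‖ ^ 2)) := by
    have h := (GaussianFourier.integrable_cexp_neg_mul_sq_norm_add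
      (b := ((1/4 : ℝ) : ℂ)) (by norm_num) 0 (0 : EuclideanSpace ℝ (Fin d))).norm
    refine h.congr (Filter.Eventually.of_forall fun v => ?_)
    simp [Complex.norm_exp]
    norm_cast
  refine (hg4.const_mul 5).mono' ?_ (Filter.Eventually.of_forall fun v => ?_)
  · exact (((continuous_norm.pow 2).neg.div_const 2).rexp.mul
      (continuous_norm.rpow_const fun x => Or.inr hs0.le)).aestronglyMeasurable
  · rw [Real.norm_of_nonneg (by positivity)]
    exact aux_pt s ‖v‖ hs0 hs2 (norm_nonneg v)

private lemma aux_scale (d : ℕ) (s : ℝ) (a : ℝ) (ha : 0 < a) :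
    ∫ u : EuclideanSpace ℝ (Fin d), Real.exp (-(a ^ 2) * ‖u‖ ^ 2 / 2) * ‖u‖ ^ s
      = (a ^ d)⁻¹ * a ^ (-s) *
        ∫ v : EuclideanSpace ℝ (Fin d), Real.exp (-‖v‖ ^ 2 / 2) * ‖v‖ ^ s := by
  set f : EuclideanSpace ℝ (Fin d) → ℝ := fun v => Real.exp (-‖v‖ ^ 2 / 2) * ‖v‖ ^ s with hf
  have h1 : ∫ u : EuclideanSpace ℝ (Fin d), f (a • u) = (a ^ d)⁻¹ * ∫ v, f v := by
    have := MeasureTheory.Measure.integral_comp_smul_of_nonneg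
      (volume : Measure (EuclideanSpace ℝ (Fin d))) f a (hR := ha.le)
    rw [this, finrank_euclideanSpace_fin, smul_eq_mul]
  have h2 : ∀ u : EuclideanSpace ℝ (Fin d),
      f (a • u) = a ^ s * (Real.exp (-(a ^ 2) * ‖u‖ ^ 2 / 2) * ‖u‖ ^ s) := by
    intro u
    have hn : ‖a • u‖ = a * ‖u‖ := by
      rw [norm_smul, Real.norm_eq_abs, abs_of_pos ha]
    rw [hf]; simp only [hn]
    rw [Real.mul_rpow ha.le (norm_nonneg u), mul_pow]
    ring
  have h3 : ∫ u : EuclideanSpace ℝ (Fin d), f (a • u)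
      = a ^ s * ∫ u : EuclideanSpace ℝ (Fin d),
          Real.exp (-(a ^ 2) * ‖u‖ ^ 2 / 2) * ‖u‖ ^ s := by
    simp_rw [h2]; exact integral_const_mul _ _
  have has : (0:ℝ) < a ^ s := Real.rpow_pos_of_pos ha s
  have hkey : a ^ s * (∫ u : EuclideanSpace ℝ (Fin d),
      Real.exp (-(a ^ 2) * ‖u‖ ^ 2 / 2) * ‖u‖ ^ s) = (a ^ d)⁻¹ * ∫ v, f v := by
    rw [← h3, h1]
  rw [Real.rpow_neg ha.le]
  calc ∫ u : EuclideanSpace ℝ (Fin d), Real.exp (-(a ^ 2) * ‖u‖ ^ 2 / 2) * ‖u‖ ^ s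
      = (a ^ s)⁻¹ * (a ^ s * ∫ u : EuclideanSpace ℝ (Fin d),
          Real.exp (-(a ^ 2) * ‖u‖ ^ 2 / 2) * ‖u‖ ^ s) := by
        rw [← mul_assoc, inv_mul_cancel₀ has.ne', one_mul]
    _ = (a ^ s)⁻¹ * ((a ^ d)⁻¹ * ∫ v, f v) := by rw [hkey]
    _ = (a ^ d)⁻¹ * (a ^ s)⁻¹ * ∫ v, f v := by ring

private lemma aux_odd (d : ℕ) (R a : ℝ) (c : EuclideanSpace ℝ (Fin d)) :
    ∫ u in {u : EuclideanSpace ℝ (Fin d) | ‖u‖ ≤ R},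
      Real.exp (-(a ^ 2) * ‖u‖ ^ 2 / 2) * ⟪c, u⟫ = 0 := by
  set S : Set (EuclideanSpace ℝ (Fin d)) := {u | ‖u‖ ≤ R} with hSdef
  have hS : MeasurableSet S := by
    have : S = Metric.closedBall 0 R := by
      ext u; simp [hSdef, Metric.mem_closedBall, dist_zero_right]
    rw [this]; exact measurableSet_closedBall
  set f : EuclideanSpace ℝ (Fin d) → ℝ :=
    fun u => Real.exp (-(a ^ 2) * ‖u‖ ^ 2 / 2) * ⟪c, u⟫ with hf
  have hind : ∀ x, S.indicator f (-x) = - S.indicator f x := by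
    intro x
    have hmem : (-x ∈ S) ↔ (x ∈ S) := by simp [hSdef]
    by_cases hx : x ∈ S
    · rw [Set.indicator_of_mem (hmem.mpr hx), Set.indicator_of_mem hx]
      simp [hf, inner_neg_right]
    · rw [Set.indicator_of_notMem (fun h => hx (hmem.mp h)), Set.indicator_of_notMem hx, neg_zero]
  have key : ∫ x, S.indicator f x = - ∫ x, S.indicator f x := by
    conv_lhs => rw [← integral_neg_eq_self (S.indicator f) volume]
    simp_rw [hind]
    exact integral_neg _
  rw [← integral_indicator hS]
  linarith


/-- Convolution-error estimate (the `T₁` term): if `g` agrees with an affine function up to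
`C₁ ‖u‖^s` on the ball of radius `R`, then the Gaussian smoothing of `g - g 0` over that
ball is of order `a^{-s}`, with constant `C₁ M_{d,s}` where
`M_{d,s} = (2π)^{-d/2} ∫ exp(-‖v‖²/2) ‖v‖^s dv` is finite. -/
theorem gaussian_convolution_error
    (d : ℕ) (hd : 1 ≤ d) (s : ℝ) (hs0 : 0 < s) (hs2 : s ≤ 2)
    (R : ℝ) (hR : 0 < R) (C₁ : ℝ) (hC₁ : 0 ≤ C₁)
    (g : EuclideanSpace ℝ (Fin d) → ℝ) (hg : Measurable g)
    (c : EuclideanSpace ℝ (Fin d))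
    (happrox : ∀ u : EuclideanSpace ℝ (Fin d), ‖u‖ ≤ R →
      |g u - g 0 - ⟪c, u⟫| ≤ C₁ * ‖u‖ ^ s) :
    Integrable (fun v : EuclideanSpace ℝ (Fin d) =>
      Real.exp (-‖v‖ ^ 2 / 2) * ‖v‖ ^ s) ∧
    ∀ a : ℝ, 0 < a →
      |(a / Real.sqrt (2 * Real.pi)) ^ d *
          ∫ u in {u : EuclideanSpace ℝ (Fin d) | ‖u‖ ≤ R},
            Real.exp (-(a ^ 2) * ‖u‖ ^ 2 / 2) * (g u - g 0)| ≤
        C₁ * ((2 * Real.pi) ^ (-(d : ℝ) / 2) *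
          ∫ v : EuclideanSpace ℝ (Fin d), Real.exp (-‖v‖ ^ 2 / 2) * ‖v‖ ^ s) *
          a ^ (-s) := by
  have hMint := aux_int d s hs0 hs2
  refine ⟨hMint, fun a ha => ?_⟩
  set S : Set (EuclideanSpace ℝ (Fin d)) := {u | ‖u‖ ≤ R} with hSdef
  have hSball : S = Metric.closedBall 0 R := by
    ext u; simp [hSdef, Metric.mem_closedBall, dist_zero_right]
  have hS : MeasurableSet S := by rw [hSball]; exact measurableSet_closedBall
  have hSfin : volume S ≠ ⊤ := by rw [hSball]; exact measure_closedBall_lt_top.ne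
  set k : EuclideanSpace ℝ (Fin d) → ℝ := fun u => Real.exp (-(a ^ 2) * ‖u‖ ^ 2 / 2) with hk
  have hkcont : Continuous k := by
    apply Real.continuous_exp.comp
    exact ((continuous_const.mul (continuous_norm.pow 2)).div_const 2)
  have hk0 : ∀ u, 0 < k u := fun u => Real.exp_pos _
  have hk1 : ∀ u, k u ≤ 1 := fun u => by
    rw [hk]
    apply Real.exp_le_one_iff.mpr
    have : (0:ℝ) ≤ a ^ 2 * ‖u‖ ^ 2 / 2 := by positivity
    nlinarith
  have hRs : ∀ u ∈ S, ‖u‖ ^ s ≤ R ^ s := fun u hu =>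
    Real.rpow_le_rpow (norm_nonneg u) hu hs0.le
  have hinner_cont : Continuous fun u : EuclideanSpace ℝ (Fin d) => ⟪c, u⟫ :=
    continuous_const.inner continuous_id
  have I1 : IntegrableOn (fun u => k u * (g u - g 0 - ⟪c, u⟫)) S volume := by
    refine Measure.integrableOn_of_bounded (M := C₁ * R ^ s) hSfin
      ((hkcont.measurable.mul ((hg.sub measurable_const).sub
        hinner_cont.measurable)).aestronglyMeasurable) ?_
    rw [ae_restrict_iff' hS]
    refine Filter.Eventually.of_forall fun u hu => ?_
    have h1 := happrox u hu
    have h2 := hRs u hu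
    rw [Real.norm_eq_abs, abs_mul, abs_of_pos (hk0 u)]
    calc k u * |g u - g 0 - ⟪c, u⟫| ≤ 1 * (C₁ * R ^ s) := by
          apply mul_le_mul (hk1 u) (h1.trans ?_) (abs_nonneg _) zero_le_one
          exact mul_le_mul_of_nonneg_left h2 hC₁
      _ = C₁ * R ^ s := one_mul _
  have I2 : IntegrableOn (fun u => k u * ⟪c, u⟫) S volume := by
    refine Measure.integrableOn_of_bounded (M := ‖c‖ * R) hSfin
      ((hkcont.measurable.mul hinner_cont.measurable).aestronglyMeasurable) ?_
    rw [ae_restrict_iff' hS]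
    refine Filter.Eventually.of_forall fun u hu => ?_
    rw [Real.norm_eq_abs, abs_mul, abs_of_pos (hk0 u)]
    calc k u * |⟪c, u⟫| ≤ 1 * (‖c‖ * R) := by
          refine mul_le_mul (hk1 u) ((abs_real_inner_le_norm c u).trans ?_)
            (abs_nonneg _) zero_le_one
          exact mul_le_mul_of_nonneg_left hu (norm_nonneg c)
      _ = ‖c‖ * R := one_mul _
  have hka : Integrable (fun u : EuclideanSpace ℝ (Fin d) => k u * ‖u‖ ^ s) := by
    have hc := (integrable_comp_smul_iff (volume : Measure (EuclideanSpace ℝ (Fin d)))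
      (fun v : EuclideanSpace ℝ (Fin d) => Real.exp (-‖v‖ ^ 2 / 2) * ‖v‖ ^ s) (ne_of_gt ha)).mpr hMint
    have h2 : ∀ u : EuclideanSpace ℝ (Fin d), Real.exp (-‖a • u‖ ^ 2 / 2) * ‖a • u‖ ^ s
        = a ^ s * (k u * ‖u‖ ^ s) := by
      intro u
      have hn : ‖a • u‖ = a * ‖u‖ := by
        rw [norm_smul, Real.norm_eq_abs, abs_of_pos ha]
      rw [hn, Real.mul_rpow ha.le (norm_nonneg u), mul_pow, hk]
      ring_nf
    refine (hc.const_mul ((a : ℝ) ^ s)⁻¹).congr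
      (Filter.Eventually.of_forall fun u => ?_)
    have has : (0:ℝ) < a ^ s := Real.rpow_pos_of_pos ha s
    simp only [h2 u]
    rw [← mul_assoc, inv_mul_cancel₀ has.ne', one_mul]
  have hMnonneg : 0 ≤ ∫ v : EuclideanSpace ℝ (Fin d), Real.exp (-‖v‖ ^ 2 / 2) * ‖v‖ ^ s :=
    integral_nonneg fun v => by positivity
  set M : ℝ := ∫ v : EuclideanSpace ℝ (Fin d), Real.exp (-‖v‖ ^ 2 / 2) * ‖v‖ ^ s with hM
  have hsplit : ∫ u in S, k u * (g u - g 0)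
      = (∫ u in S, k u * (g u - g 0 - ⟪c, u⟫)) + ∫ u in S, k u * ⟪c, u⟫ := by
    rw [← integral_add I1 I2]
    congr 1
    funext u
    ring
  have hzero : ∫ u in S, k u * ⟪c, u⟫ = 0 := aux_odd d R a c
  have hI : |∫ u in S, k u * (g u - g 0)| ≤ C₁ * ((a ^ d)⁻¹ * a ^ (-s) * M) := by
    rw [hsplit, hzero, add_zero]
    calc |∫ u in S, k u * (g u - g 0 - ⟪c, u⟫)|
        ≤ ∫ u in S, |k u * (g u - g 0 - ⟪c, u⟫)| := by
          simpa only [Real.norm_eq_abs] using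
            norm_integral_le_integral_norm (μ := volume.restrict S)
              (fun u => k u * (g u - g 0 - ⟪c, u⟫))
      _ ≤ ∫ u in S, C₁ * (k u * ‖u‖ ^ s) := by
          refine setIntegral_mono_on I1.abs ((hka.const_mul C₁).integrableOn) hS
            fun u hu => ?_
          rw [abs_mul, abs_of_pos (hk0 u)]
          calc k u * |g u - g 0 - ⟪c, u⟫| ≤ k u * (C₁ * ‖u‖ ^ s) :=
                mul_le_mul_of_nonneg_left (happrox u hu) (hk0 u).le
            _ = C₁ * (k u * ‖u‖ ^ s) := by ring
      _ = C₁ * ∫ u in S, k u * ‖u‖ ^ s := integral_const_mul _ _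
      _ ≤ C₁ * ∫ u : EuclideanSpace ℝ (Fin d), k u * ‖u‖ ^ s := by
          refine mul_le_mul_of_nonneg_left
            (setIntegral_le_integral hka (Filter.Eventually.of_forall fun u => ?_)) hC₁
          have := (hk0 u).le
          positivity
      _ = C₁ * ((a ^ d)⁻¹ * a ^ (-s) * M) := by
          rw [hM, hk]
          rw [aux_scale d s a ha]
  have h2π : (0:ℝ) < 2 * Real.pi := by positivity
  have hpre : (0:ℝ) ≤ (a / Real.sqrt (2 * Real.pi)) ^ d := by positivity
  have hid : (a / Real.sqrt (2 * Real.pi)) ^ d * (a ^ d)⁻¹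
      = (2 * Real.pi) ^ (-(d:ℝ) / 2) := by
    rw [div_pow, Real.sqrt_eq_rpow, ← Real.rpow_natCast ((2 * Real.pi) ^ ((1:ℝ)/2)) d,
      ← Real.rpow_mul h2π.le]
    rw [show -(d:ℝ)/2 = -((1:ℝ)/2 * d) by ring, Real.rpow_neg h2π.le]
    have had : (a:ℝ) ^ d ≠ 0 := (pow_pos ha d).ne'
    field_simp
  rw [abs_mul, abs_of_nonneg hpre]
  calc (a / Real.sqrt (2 * Real.pi)) ^ d * |∫ u in S, k u * (g u - g 0)|
      ≤ (a / Real.sqrt (2 * Real.pi)) ^ d * (C₁ * ((a ^ d)⁻¹ * a ^ (-s) * M)) :=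
        mul_le_mul_of_nonneg_left hI hpre
    _ = C₁ * (((a / Real.sqrt (2 * Real.pi)) ^ d * (a ^ d)⁻¹) * M) * a ^ (-s) := by ring
    _ = C₁ * ((2 * Real.pi) ^ (-(d:ℝ) / 2) * M) * a ^ (-s) := by rw [hid]
end

section
/- Let d ≥ 1 be an integer and C_p > 0. Let B be a measurable subset of {u ∈ ℝ^d : ‖u‖² ≤ 1/(2C_p)} and let Q : ℝ^d → ℝ be measurable with |Q(u) − ‖u‖²| ≤ C_p‖u‖⁴ for all u ∈ B. Then there exists a constant C₆ > 0 depending only on d and C_p such that for every a > 0, (a/√(2π))^d ∫_B | exp(−a²Q(u)/2) − exp(−a²‖u‖²/2) | du ≤ C₆ · a^{−2}. -/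
open MeasureTheory Real

-- |e^x - e^y| ≤ e^(max x y) * |x - y|
lemma abs_exp_sub_exp_le (x y : ℝ) :
    |Real.exp x - Real.exp y| ≤ Real.exp (max x y) * |x - y| := by
  wlog hxy : y ≤ x generalizing x y
  · have := this y x (le_of_not_ge hxy)
    rwa [abs_sub_comm, max_comm, abs_sub_comm y x] at this
  rw [abs_of_nonneg (sub_nonneg.2 (Real.exp_le_exp.2 hxy)),
    abs_of_nonneg (sub_nonneg.2 hxy), max_eq_left hxy]
  have h1 : Real.exp (y - x) ≥ 1 + (y - x) := by linarith [Real.add_one_le_exp (y - x)]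
  have h2 : Real.exp y = Real.exp x * Real.exp (y - x) := by
    rw [← Real.exp_add]; ring_nf
  nlinarith [Real.exp_pos x, Real.exp_pos (y - x)]

lemma gauss_integrable {d : ℕ} {c : ℝ} (hc : 0 < c) :
    Integrable (fun v : EuclideanSpace ℝ (Fin d) => Real.exp (-c * ‖v‖ ^ 2)) := by
  have h := (GaussianFourier.integrable_cexp_neg_mul_sq_norm_add
    (V := EuclideanSpace ℝ (Fin d)) (b := (c : ℂ)) (by simpa using hc) 0
    (0 : EuclideanSpace ℝ (Fin d))).norm
  convert h using 2 with v
  rw [Complex.norm_exp]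
  norm_num
  left
  norm_cast

lemma pow4_gauss_integrable {d : ℕ} {c : ℝ} (hc : 0 < c) :
    Integrable (fun v : EuclideanSpace ℝ (Fin d) => ‖v‖ ^ 4 * Real.exp (-c * ‖v‖ ^ 2)) := by
  apply Integrable.mono' ((gauss_integrable (d := d) (by positivity : (0:ℝ) < c/2)).const_mul (16 / c ^ 2))
  · exact ((continuous_norm.pow 4).mul
      (Real.continuous_exp.comp (continuous_const.mul (continuous_norm.pow 2)))).aestronglyMeasurable
  · filter_upwards with v
    have hn : (0:ℝ) ≤ ‖v‖ := norm_nonneg v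
    have hE : Real.exp (-c * ‖v‖ ^ 2) = Real.exp (-(c/2) * ‖v‖ ^ 2) * Real.exp (-(c/2) * ‖v‖ ^ 2) := by
      rw [← Real.exp_add]; ring_nf
    have h1 : (c/2) * ‖v‖ ^ 2 + 1 ≤ Real.exp ((c/2) * ‖v‖ ^ 2) := Real.add_one_le_exp _
    have h2 : Real.exp (-(c/2) * ‖v‖ ^ 2) * Real.exp ((c/2) * ‖v‖ ^ 2) = 1 := by
      rw [← Real.exp_add]; ring_nf; exact Real.exp_zero
    have h3 : ‖v‖ ^ 4 * Real.exp (-(c/2) * ‖v‖ ^ 2) ≤ 16 / c ^ 2 := by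
      have hg : c/4 * ‖v‖ ^ 2 + 1 ≤ Real.exp (c/4 * ‖v‖ ^ 2) := Real.add_one_le_exp _
      have hgp : (0:ℝ) < Real.exp (c/4 * ‖v‖ ^ 2) := Real.exp_pos _
      have hEn : (0:ℝ) < Real.exp (-(c/2) * ‖v‖ ^ 2) := Real.exp_pos _
      have hEe : Real.exp (-(c/2) * ‖v‖ ^ 2) *
          (Real.exp (c/4 * ‖v‖ ^ 2) * Real.exp (c/4 * ‖v‖ ^ 2)) = 1 := by
        rw [← Real.exp_add, ← Real.exp_add]; ring_nf; exact Real.exp_zero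
      rw [le_div_iff₀ (by positivity)]
      nlinarith [mul_pos hgp hgp, sq_nonneg (c * ‖v‖ ^ 2), mul_pos hc hc,
        mul_le_mul hg hg (by positivity) hgp.le]
    rw [Real.norm_eq_abs, abs_of_nonneg (by positivity)]
    rw [hE, ← mul_assoc]
    have := Real.exp_pos (-(c/2) * ‖v‖ ^ 2)
    nlinarith

/-- The `T₃` estimate: if `Q(u)` deviates from `‖u‖²` by at most `C_p ‖u‖⁴` on a set `B`
contained in `{‖u‖² ≤ 1/(2 C_p)}`, then the difference of the two Gaussian kernels,
integrated over `B` and normalized, is of order `a^{-2}`, with a constant depending only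
on `d` and `C_p`. -/
theorem non_flat_error_bound (d : ℕ) (hd : 1 ≤ d) (Cp : ℝ) (hCp : 0 < Cp) :
    ∃ C₆ : ℝ, 0 < C₆ ∧
      ∀ (B : Set (EuclideanSpace ℝ (Fin d))), MeasurableSet B →
        B ⊆ {u : EuclideanSpace ℝ (Fin d) | ‖u‖ ^ 2 ≤ 1 / (2 * Cp)} →
      ∀ (Q : EuclideanSpace ℝ (Fin d) → ℝ), Measurable Q →
        (∀ u ∈ B, |Q u - ‖u‖ ^ 2| ≤ Cp * ‖u‖ ^ 4) →
      ∀ a : ℝ, 0 < a →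
        (a / Real.sqrt (2 * Real.pi)) ^ d *
            ∫ u in B,
              |Real.exp (-(a ^ 2) * Q u / 2) - Real.exp (-(a ^ 2) * ‖u‖ ^ 2 / 2)| ≤
          C₆ * a ^ (-(2 : ℝ)) := by
  set E := EuclideanSpace ℝ (Fin d)
  set s := Real.sqrt (2 * Real.pi) with hs_def
  have hs : 0 < s := Real.sqrt_pos.2 (by positivity)
  set I : ℝ := ∫ v : E, ‖v‖ ^ 4 * Real.exp (-(1/4) * ‖v‖ ^ 2) with hI_def
  have hI0 : 0 ≤ I := integral_nonneg fun v => by positivity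
  refine ⟨s⁻¹ ^ d * (Cp / 2) * I + 1, by positivity, ?_⟩
  intro B hB hBsub Q hQ hQb a ha
  set g : E → ℝ := fun u => a ^ 2 * Cp / 2 * (‖u‖ ^ 4 * Real.exp (-(a ^ 2 / 4) * ‖u‖ ^ 2))
    with hg_def
  have hg_int : Integrable g :=
    (pow4_gauss_integrable (d := d) (c := a ^ 2 / 4) (by positivity)).const_mul _
  have hg_nonneg : ∀ u, 0 ≤ g u := fun u => by positivity
  set f : E → ℝ := fun u =>
    |Real.exp (-(a ^ 2) * Q u / 2) - Real.exp (-(a ^ 2) * ‖u‖ ^ 2 / 2)| with hf_def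
  have key : ∀ u ∈ B, f u ≤ g u := by
    intro u hu
    have hub : ‖u‖ ^ 2 ≤ 1 / (2 * Cp) := hBsub hu
    have hq := hQb u hu
    have habs : |(-(a ^ 2) * Q u / 2) - (-(a ^ 2) * ‖u‖ ^ 2 / 2)| ≤ a ^ 2 * Cp * ‖u‖ ^ 4 / 2 := by
      have he : (-(a ^ 2) * Q u / 2) - (-(a ^ 2) * ‖u‖ ^ 2 / 2)
          = -(a ^ 2 / 2) * (Q u - ‖u‖ ^ 2) := by ring
      rw [he, abs_mul, abs_neg, abs_of_nonneg (by positivity : (0:ℝ) ≤ a ^ 2 / 2)]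
      nlinarith [sq_nonneg a, abs_nonneg (Q u - ‖u‖ ^ 2)]
    have hCu : Cp * ‖u‖ ^ 4 ≤ ‖u‖ ^ 2 / 2 := by
      rw [le_div_iff₀ (by positivity : (0:ℝ) < 2 * Cp)] at hub
      nlinarith [sq_nonneg ‖u‖, mul_le_mul_of_nonneg_left hub (sq_nonneg ‖u‖)]
    have hmax : max (-(a ^ 2) * Q u / 2) (-(a ^ 2) * ‖u‖ ^ 2 / 2)
        ≤ -(a ^ 2 / 4) * ‖u‖ ^ 2 := by
      rw [max_le_iff]
      have hx := (abs_le.1 habs).2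
      constructor
      · nlinarith [sq_nonneg a, mul_le_mul_of_nonneg_left hCu (sq_nonneg a)]
      · nlinarith [sq_nonneg a, mul_nonneg (sq_nonneg a) (sq_nonneg ‖u‖)]
    calc f u ≤ Real.exp (max (-(a ^ 2) * Q u / 2) (-(a ^ 2) * ‖u‖ ^ 2 / 2)) *
          |(-(a ^ 2) * Q u / 2) - (-(a ^ 2) * ‖u‖ ^ 2 / 2)| := abs_exp_sub_exp_le _ _
      _ ≤ Real.exp (-(a ^ 2 / 4) * ‖u‖ ^ 2) * (a ^ 2 * Cp * ‖u‖ ^ 4 / 2) :=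
          mul_le_mul (Real.exp_le_exp.2 hmax) habs (abs_nonneg _) (Real.exp_pos _).le
      _ = g u := by rw [hg_def]; ring
  have hf_meas : AEStronglyMeasurable f (volume.restrict B) := by
    refine Measurable.aestronglyMeasurable ?_
    apply Measurable.abs
    exact (Real.measurable_exp.comp ((hQ.const_mul _).div_const 2)).sub
      (Continuous.measurable (by fun_prop))
  have hf_int : IntegrableOn f B := by
    refine (hg_int.integrableOn).mono' hf_meas ?_
    refine (ae_restrict_iff' hB).2 (Filter.Eventually.of_forall fun u hu => ?_)
    rw [Real.norm_eq_abs, abs_abs]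
    exact key u hu
  have step1 : ∫ u in B, f u ≤ ∫ u in B, g u := setIntegral_mono_on hf_int hg_int.integrableOn hB key
  have step2 : ∫ u in B, g u ≤ ∫ u, g u :=
    setIntegral_le_integral hg_int (Filter.Eventually.of_forall hg_nonneg)
  -- compute the full-space integral of g
  have hsc := MeasureTheory.Measure.integral_comp_smul_of_nonneg (μ := (volume : Measure E))
      (fun v : E => ‖v‖ ^ 4 * Real.exp (-(1/4) * ‖v‖ ^ 2)) a (hR := ha.le)
  have hpt : ∀ x : E, ‖a • x‖ ^ 4 * Real.exp (-(1/4) * ‖a • x‖ ^ 2)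
      = a ^ 4 * (‖x‖ ^ 4 * Real.exp (-(a ^ 2 / 4) * ‖x‖ ^ 2)) := by
    intro x
    rw [norm_smul, Real.norm_eq_abs, abs_of_pos ha,
      show -(1/4) * (a * ‖x‖) ^ 2 = -(a ^ 2 / 4) * ‖x‖ ^ 2 from by ring]
    ring
  simp only [hpt, finrank_euclideanSpace_fin, smul_eq_mul] at hsc
  rw [integral_const_mul, ← hI_def,
    show Module.finrank ℝ E = d from finrank_euclideanSpace_fin] at hsc
  have hJ : ∫ x : E, ‖x‖ ^ 4 * Real.exp (-(a ^ 2 / 4) * ‖x‖ ^ 2) = (a ^ d)⁻¹ * I / a ^ 4 := by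
    rw [eq_div_iff (by positivity : (a:ℝ) ^ 4 ≠ 0)]
    linear_combination hsc
  have hgval : ∫ u, g u = a ^ 2 * Cp / 2 * ((a ^ d)⁻¹ * I / a ^ 4) := by
    rw [hg_def]
    rw [integral_const_mul, hJ]
  have hrw : a ^ (-(2:ℝ)) = (a ^ 2)⁻¹ := by
    rw [Real.rpow_neg ha.le]
    norm_num [Real.rpow_natCast a 2]
  rw [hrw]
  have hval : (a / s) ^ d * (a ^ 2 * Cp / 2 * ((a ^ d)⁻¹ * I / a ^ 4))
      = s⁻¹ ^ d * (Cp / 2) * I * (a ^ 2)⁻¹ := by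
    rw [div_pow, inv_pow]
    field_simp
  calc (a / s) ^ d * ∫ u in B, f u
      ≤ (a / s) ^ d * ∫ u, g u :=
        mul_le_mul_of_nonneg_left (step1.trans step2) (by positivity)
    _ = s⁻¹ ^ d * (Cp / 2) * I * (a ^ 2)⁻¹ := by rw [hgval, hval]
    _ ≤ (s⁻¹ ^ d * (Cp / 2) * I + 1) * (a ^ 2)⁻¹ := by
        have : (0:ℝ) < (a ^ 2)⁻¹ := by positivity
        nlinarith
end

section
/- For every A > 0 and σ > 0 there exists a constant C > 0, depending only on A and σ, with the following property. Let (S, 𝒮, G) be a probability space, let g : S → ℝ be measurable with |g(x)| ≤ 2A for all x ∈ S and ‖g‖₂² := ∫_S g² dG > 0. Let X₁, …, X_m be independent S-valued random variables with law G, and let ε₁, …, ε_m be independent real Gaussian random variables with mean 0 and variance σ², with the family (ε_i) independent of the family (X_i). Then P( (1/4)·‖g‖₂² + (1/m)Σ_{i=1}^m ε_i² ≤ (1/m)Σ_{i=1}^m (g(X_i) − ε_i)² ≤ 2·‖g‖₂² + (1/m)Σ_{i=1}^m ε_i² ) ≥ 1 − 8·exp(−C·m·‖g‖₂²). -/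
open MeasureTheory ProbabilityTheory Real
open scoped BigOperators ENNReal NNReal

-- L1: lintegral of product over pi measure
lemma lintegral_pi_prod {E : Type*} [MeasurableSpace E] (μ : Measure E) [IsProbabilityMeasure μ] :
    ∀ (n : ℕ) (f : Fin n → E → ℝ≥0∞), (∀ i, Measurable (f i)) →
    ∫⁻ x : Fin n → E, ∏ i, f i (x i) ∂(Measure.pi fun _ => μ) = ∏ i, ∫⁻ x, f i x ∂μ := by
  intro n
  induction n with
  | zero =>
      intro f hf
      simp [lintegral_const]
  | succ n ih =>
      intro f hf
      have hmp := measurePreserving_piFinSuccAbove (fun _ : Fin (n+1) => μ) 0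
      set e := MeasurableEquiv.piFinSuccAbove (fun _ : Fin (n+1) => E) 0 with he
      have hG : Measurable (fun y : E × (Fin n → E) => f 0 y.1 * ∏ j : Fin n, f j.succ (y.2 j)) := by
        apply Measurable.mul ((hf 0).comp measurable_fst)
        exact Finset.measurable_prod _ fun j _ => (hf j.succ).comp ((measurable_pi_apply j).comp measurable_snd)
      have key : ∫⁻ x : Fin (n+1) → E, ∏ i, f i (x i) ∂(Measure.pi fun _ => μ)
          = ∫⁻ y : E × (Fin n → E), f 0 y.1 * ∏ j : Fin n, f j.succ (y.2 j)
              ∂(μ.prod (Measure.pi fun _ : Fin n => μ)) := by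
        rw [← hmp.lintegral_comp hG]
        congr 1
        funext x
        simp [he, MeasurableEquiv.piFinSuccAbove, Fin.prod_univ_succ, Fin.succAbove, Fin.tail]
      rw [key, lintegral_prod_mul (f := fun a => f 0 a)
        (g := fun y : Fin n → E => ∏ j : Fin n, f j.succ (y j)) (hf 0).aemeasurable
        (Finset.measurable_prod _ fun j _ => (hf j.succ).comp (measurable_pi_apply j)).aemeasurable,
        ih (fun j => f j.succ) (fun j => hf j.succ), Fin.prod_univ_succ]

-- L2: gaussian mgf (lintegral form)
lemma gauss_mgf_lintegral (σ : ℝ) (hσ : 0 < σ) (c : ℝ) :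
    ∫⁻ e : ℝ, ENNReal.ofReal (exp (c * e)) ∂(gaussianReal 0 (σ^2).toNNReal)
      = ENNReal.ofReal (exp (σ^2 * c^2 / 2)) := by
  have hv : (0:ℝ) < σ^2 := by positivity
  have hV : (σ^2).toNNReal ≠ 0 := by
    simp [Real.toNNReal_eq_zero, not_le, hv, hσ.ne']
  have hVc : (((σ^2).toNNReal : ℝ≥0) : ℝ) = σ^2 := Real.coe_toNNReal _ hv.le
  rw [gaussianReal_of_var_ne_zero 0 hV,
    lintegral_withDensity_eq_lintegral_mul _ (measurable_gaussianPDF 0 _)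
      (by fun_prop : Measurable fun e : ℝ => ENNReal.ofReal (exp (c * e)))]
  have hpt : ∀ x : ℝ, (gaussianPDF 0 (σ^2).toNNReal * fun e => ENNReal.ofReal (exp (c * e))) x
      = ENNReal.ofReal (exp (σ^2 * c^2 / 2)) * ENNReal.ofReal (gaussianPDFReal (σ^2 * c) (σ^2).toNNReal x) := by
    intro x
    simp only [Pi.mul_apply, gaussianPDF_def]
    rw [← ENNReal.ofReal_mul (gaussianPDFReal_nonneg _ _ _),
      ← ENNReal.ofReal_mul (exp_pos _).le]
    congr 1
    unfold gaussianPDFReal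
    rw [hVc]
    rw [mul_assoc, ← exp_add, mul_left_comm, ← exp_add]
    congr 2
    field_simp
    ring
  simp_rw [hpt]
  rw [lintegral_const_mul _ (by
    exact (measurable_gaussianPDFReal _ _).ennreal_ofReal), lintegral_gaussianPDFReal_eq_one _ hV, mul_one]

-- L3: chord bound for exp on [0,B]
lemma exp_chord {y B s : ℝ} (hB : 0 < B) (hy0 : 0 ≤ y) (hyB : y ≤ B) :
    exp (s * y) ≤ 1 + (exp (s * B) - 1) * (y / B) := by
  have ha : (0:ℝ) ≤ 1 - y / B := by
    have : y / B ≤ 1 := (div_le_one hB).2 hyB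
    linarith
  have hb : (0:ℝ) ≤ y / B := by positivity
  have hab : (1 - y / B) + y / B = 1 := by ring
  have h := convexOn_exp.2 (Set.mem_univ (0:ℝ)) (Set.mem_univ (s * B)) ha hb hab
  simp only [smul_eq_mul, mul_zero, zero_add, exp_zero, mul_one] at h
  have hxy : y / B * (s * B) = s * y := by field_simp
  rw [hxy] at h
  linarith

-- exp x ≤ 1 + 2x on [0,1]
lemma exp_le_one_add_two_mul {x : ℝ} (h0 : 0 ≤ x) (h1 : x ≤ 1) : exp x ≤ 1 + 2 * x := by
  have h := exp_chord (s := 1) (B := 1) one_pos h0 h1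
  simp only [one_mul, mul_one, div_one] at h
  nlinarith [exp_one_lt_d9]

-- L5: exponential Markov
lemma exp_markov {α : Type*} [MeasurableSpace α] (μ : Measure α) [IsProbabilityMeasure μ]
    {Y : α → ℝ} (hY : Measurable Y) {t : ℝ} (ht : 0 ≤ t) (a : ℝ) :
    μ {x | a ≤ Y x} ≤ ENNReal.ofReal (exp (-(t * a))) * ∫⁻ x, ENNReal.ofReal (exp (t * Y x)) ∂μ := by
  have hsub : {x | a ≤ Y x} ⊆ {x | ENNReal.ofReal (exp (t * a)) ≤ ENNReal.ofReal (exp (t * Y x))} := by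
    intro x hx
    exact ENNReal.ofReal_le_ofReal (exp_le_exp.2 (mul_le_mul_of_nonneg_left hx ht))
  have hmark := mul_meas_ge_le_lintegral₀
    (μ := μ) (f := fun x => ENNReal.ofReal (exp (t * Y x)))
    ((hY.const_mul t).exp.ennreal_ofReal.aemeasurable) (ENNReal.ofReal (exp (t * a)))
  have h1 : μ {x | a ≤ Y x} ≤ μ {x | ENNReal.ofReal (exp (t * a)) ≤ ENNReal.ofReal (exp (t * Y x))} :=
    measure_mono hsub
  have hc0 : (ENNReal.ofReal (exp (t * a))) ≠ 0 := by
    simp [ENNReal.ofReal_eq_zero, not_le, exp_pos]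
  have hcT : (ENNReal.ofReal (exp (t * a))) ≠ ⊤ := ENNReal.ofReal_ne_top
  calc μ {x | a ≤ Y x}
      ≤ (ENNReal.ofReal (exp (t * a)))⁻¹ *
        (ENNReal.ofReal (exp (t * a)) * μ {x | ENNReal.ofReal (exp (t * a)) ≤ ENNReal.ofReal (exp (t * Y x))}) := by
        rw [← mul_assoc, ENNReal.inv_mul_cancel hc0 hcT, one_mul]
        exact h1
    _ ≤ (ENNReal.ofReal (exp (t * a)))⁻¹ * ∫⁻ x, ENNReal.ofReal (exp (t * Y x)) ∂μ :=
        mul_le_mul_right hmark _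
    _ = ENNReal.ofReal (exp (-(t * a))) * ∫⁻ x, ENNReal.ofReal (exp (t * Y x)) ∂μ := by
        congr 1
        rw [← ENNReal.ofReal_inv_of_pos (exp_pos _), ← exp_neg]

-- L4: single-coordinate mgf bound
lemma mgf_single_bound {S : Type*} [MeasurableSpace S] (G : Measure S) [IsProbabilityMeasure G]
    {g : S → ℝ} (hg : Measurable g) {B : ℝ} (hB : 0 < B) (hbd : ∀ x, g x ^ 2 ≤ B) (s : ℝ) :
    ∫⁻ x, ENNReal.ofReal (exp (s * g x ^ 2)) ∂G
      ≤ ENNReal.ofReal (exp ((exp (s * B) - 1) * ((∫ x, g x ^ 2 ∂G) / B))) := by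
  set c := exp (s * B) - 1 with hc
  have hint : Integrable (fun x => g x ^ 2) G := by
    refine Integrable.mono' (integrable_const B) ((hg.pow_const 2).aestronglyMeasurable) ?_
    filter_upwards with x
    rw [norm_eq_abs, abs_of_nonneg (sq_nonneg _)]
    exact hbd x
  have hposh : ∀ x, 0 ≤ 1 + c * (g x ^ 2 / B) := fun x =>
    le_trans (exp_pos _).le (exp_chord hB (sq_nonneg _) (hbd x))
  have hInth : Integrable (fun x => 1 + c * (g x ^ 2 / B)) G :=
    (integrable_const 1).add ((hint.div_const B).const_mul c)
  calc ∫⁻ x, ENNReal.ofReal (exp (s * g x ^ 2)) ∂G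
      ≤ ∫⁻ x, ENNReal.ofReal (1 + c * (g x ^ 2 / B)) ∂G := by
        refine lintegral_mono fun x => ENNReal.ofReal_le_ofReal ?_
        have := exp_chord (s := s) hB (sq_nonneg (g x)) (hbd x)
        linarith
    _ = ENNReal.ofReal (∫ x, (1 + c * (g x ^ 2 / B)) ∂G) :=
        (ofReal_integral_eq_lintegral_ofReal hInth (ae_of_all _ hposh)).symm
    _ ≤ ENNReal.ofReal (exp (c * ((∫ x, g x ^ 2 ∂G) / B))) := by
        apply ENNReal.ofReal_le_ofReal
        rw [integral_add (integrable_const 1) ((hint.div_const B).const_mul c),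
          integral_const, integral_const_mul, integral_div]
        have h := Real.add_one_le_exp (c * ((∫ x, g x ^ 2 ∂G) / B))
        simp only [probReal_univ, smul_eq_mul, one_mul]
        linarith
    _ = ENNReal.ofReal (exp (c * ((∫ x, g x ^ 2 ∂G) / B))) := rfl

-- L6: mgf bound for the sum over pi measure
lemma mgf_sum_bound {S : Type*} [MeasurableSpace S] (G : Measure S) [IsProbabilityMeasure G]
    {g : S → ℝ} (hg : Measurable g) {B : ℝ} (hB : 0 < B) (hbd : ∀ x, g x ^ 2 ≤ B) (s : ℝ) (m : ℕ) :
    ∫⁻ x : Fin m → S, ENNReal.ofReal (exp (s * ∑ i, g (x i) ^ 2)) ∂(Measure.pi fun _ => G)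
      ≤ ENNReal.ofReal (exp (m * ((exp (s * B) - 1) * ((∫ x, g x ^ 2 ∂G) / B)))) := by
  have hrw : ∀ x : Fin m → S, ENNReal.ofReal (exp (s * ∑ i, g (x i) ^ 2))
      = ∏ i : Fin m, ENNReal.ofReal (exp (s * g (x i) ^ 2)) := by
    intro x
    rw [Finset.mul_sum, exp_sum, ENNReal.ofReal_prod_of_nonneg (fun i _ => (exp_pos _).le)]
  simp_rw [hrw]
  rw [lintegral_pi_prod G m (fun _ x => ENNReal.ofReal (exp (s * g x ^ 2)))
    (fun _ => ((hg.pow_const 2).const_mul s).exp.ennreal_ofReal)]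
  calc ∏ _i : Fin m, ∫⁻ x, ENNReal.ofReal (exp (s * g x ^ 2)) ∂G
      ≤ ∏ _i : Fin m, ENNReal.ofReal (exp ((exp (s * B) - 1) * ((∫ x, g x ^ 2 ∂G) / B))) :=
        Finset.prod_le_prod' fun _ _ => mgf_single_bound G hg hB hbd s
    _ = ENNReal.ofReal (exp (m * ((exp (s * B) - 1) * ((∫ x, g x ^ 2 ∂G) / B)))) := by
        rw [Finset.prod_const, Finset.card_univ, Fintype.card_fin,
          ← ENNReal.ofReal_pow (exp_pos _).le, ← exp_nat_mul]

-- L7: mgf bound for the cross term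
lemma mgf_cross_bound {S : Type*} [MeasurableSpace S] (G : Measure S) [IsProbabilityMeasure G]
    {σ : ℝ} (hσ : 0 < σ)
    {g : S → ℝ} (hg : Measurable g) {B : ℝ} (hB : 0 < B) (hbd : ∀ x, g x ^ 2 ≤ B) (t : ℝ) (m : ℕ) :
    ∫⁻ p : (Fin m → S) × (Fin m → ℝ), ENNReal.ofReal (exp (t * ∑ i, g (p.1 i) * p.2 i))
        ∂((Measure.pi fun _ => G).prod (Measure.pi fun _ => gaussianReal 0 (σ^2).toNNReal))
      ≤ ENNReal.ofReal (exp (m * ((exp (σ^2 * t^2 / 2 * B) - 1) * ((∫ x, g x ^ 2 ∂G) / B)))) := by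
  have hTmeas : Measurable fun p : (Fin m → S) × (Fin m → ℝ) =>
      ENNReal.ofReal (exp (t * ∑ i, g (p.1 i) * p.2 i)) := by
    refine Measurable.ennreal_ofReal (Real.measurable_exp.comp (Measurable.const_mul ?_ t))
    exact Finset.measurable_sum _ fun i _ =>
      ((hg.comp ((measurable_pi_apply i).comp measurable_fst)).mul
        ((measurable_pi_apply i).comp measurable_snd))
  rw [lintegral_prod _ hTmeas.aemeasurable]
  have hinner : ∀ x : Fin m → S,
      ∫⁻ e : Fin m → ℝ, ENNReal.ofReal (exp (t * ∑ i, g (x i) * e i))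
          ∂(Measure.pi fun _ => gaussianReal 0 (σ^2).toNNReal)
        = ENNReal.ofReal (exp ((σ^2 * t^2 / 2) * ∑ i, g (x i) ^ 2)) := by
    intro x
    have hrw : ∀ e : Fin m → ℝ, ENNReal.ofReal (exp (t * ∑ i, g (x i) * e i))
        = ∏ i : Fin m, ENNReal.ofReal (exp ((t * g (x i)) * e i)) := by
      intro e
      rw [Finset.mul_sum, exp_sum, ENNReal.ofReal_prod_of_nonneg (fun i _ => (exp_pos _).le)]
      congr 1
      funext i
      ring_nf
    simp_rw [hrw]
    rw [lintegral_pi_prod _ m (fun i e => ENNReal.ofReal (exp ((t * g (x i)) * e)))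
      (fun i => (measurable_id.const_mul _).exp.ennreal_ofReal)]
    have : ∀ i : Fin m, ∫⁻ e, ENNReal.ofReal (exp ((t * g (x i)) * e))
        ∂(gaussianReal 0 (σ^2).toNNReal) = ENNReal.ofReal (exp (σ^2 * (t * g (x i))^2 / 2)) :=
      fun i => gauss_mgf_lintegral σ hσ _
    simp_rw [this]
    rw [← ENNReal.ofReal_prod_of_nonneg (fun i _ => (exp_pos _).le), ← exp_sum]
    congr 2
    rw [Finset.mul_sum]
    congr 1
    funext i
    ring
  simp_rw [hinner]
  exact mgf_sum_bound G hg hB hbd (σ^2 * t^2 / 2) m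

-- lintegral of a function of the first coordinate over a product
lemma lintegral_fst' {α β : Type*} [MeasurableSpace α] [MeasurableSpace β]
    (μ : Measure α) (ν : Measure β) [SigmaFinite ν] [IsProbabilityMeasure ν]
    {F : α → ℝ≥0∞} (hF : Measurable F) :
    ∫⁻ p : α × β, F p.1 ∂(μ.prod ν) = ∫⁻ x, F x ∂μ := by
  rw [lintegral_prod (fun p : α × β => F p.1) (hF.comp measurable_fst).aemeasurable]
  simp [lintegral_const, measure_univ]

-- joint law of an independent vector with identical marginals
lemma map_vec_pi {Ω : Type} [MeasurableSpace Ω] (P : Measure Ω) [IsProbabilityMeasure P]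
    {E : Type*} [MeasurableSpace E] (ν : Measure E) [IsProbabilityMeasure ν] (m : ℕ)
    (X : Fin m → Ω → E) (hX : ∀ i, Measurable (X i))
    (hind : iIndepFun X P)
    (hlaw : ∀ i, Measure.map (X i) P = ν) :
    Measure.map (fun ω i => X i ω) P = Measure.pi fun _ => ν := by
  refine (Measure.pi_eq fun s hs => ?_).symm
  rw [Measure.map_apply (measurable_pi_lambda _ hX) (MeasurableSet.univ_pi hs)]
  have hpre : (fun ω i => X i ω) ⁻¹' Set.pi Set.univ s = ⋂ i ∈ Finset.univ, X i ⁻¹' s i := by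
    ext ω; simp [Set.mem_pi]
  rw [hpre, hind.measure_inter_preimage_eq_mul Finset.univ (fun i _ => hs i)]
  exact Finset.prod_congr rfl fun i _ => by rw [← hlaw i, Measure.map_apply (hX i) (hs i)]

set_option maxHeartbeats 1000000 in
/-- Key cross-validation inequality: for every `A > 0` and `σ > 0` there is `C > 0`,
depending only on `A` and `σ`, such that for any `g` bounded by `2A` with
`‖g‖₂² = ∫ g² dG > 0`, an i.i.d. sample `X₁,…,X_m` from `G`, and i.i.d. `N(0,σ²)` noise
`ε₁,…,ε_m` independent of the sample, the mean squared prediction error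
`(1/m)Σ (g(Xᵢ) - εᵢ)²` is sandwiched between `‖g‖₂²/4` and `2‖g‖₂²`, up to the common
additive term `(1/m)Σ εᵢ²`, with probability at least `1 - 8 exp(-C m ‖g‖₂²)`. -/
theorem mspe_sandwich (A σ : ℝ) (hA : 0 < A) (hσ : 0 < σ) :
    ∃ C : ℝ, 0 < C ∧
      ∀ (Ω : Type) [MeasurableSpace Ω] (P : Measure Ω) [IsProbabilityMeasure P]
        (S : Type) [MeasurableSpace S] (G : Measure S) [IsProbabilityMeasure G]
        (g : S → ℝ), Measurable g → (∀ x, |g x| ≤ 2 * A) →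
        0 < ∫ x, (g x) ^ 2 ∂G →
      ∀ (m : ℕ), 1 ≤ m →
      ∀ (X : Fin m → Ω → S), (∀ i, Measurable (X i)) →
        iIndepFun X P →
        (∀ i, Measure.map (X i) P = G) →
      ∀ (ε : Fin m → Ω → ℝ), (∀ i, Measurable (ε i)) →
        iIndepFun ε P →
        (∀ i, Measure.map (ε i) P = gaussianReal 0 (Real.toNNReal (σ ^ 2))) →
        IndepFun (fun ω (i : Fin m) => X i ω) (fun ω (i : Fin m) => ε i ω) P →
        1 - ENNReal.ofReal (8 * Real.exp (-C * m * ∫ x, (g x) ^ 2 ∂G)) ≤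
          P {ω |
            (1 / 4) * (∫ x, (g x) ^ 2 ∂G) + (1 / m) * ∑ i, (ε i ω) ^ 2 ≤
              (1 / m) * ∑ i, (g (X i ω) - ε i ω) ^ 2 ∧
            (1 / m) * ∑ i, (g (X i ω) - ε i ω) ^ 2 ≤
              2 * (∫ x, (g x) ^ 2 ∂G) + (1 / m) * ∑ i, (ε i ω) ^ 2} := by
  have hexp_gt : (2.7182818283:ℝ) < exp 1 := exp_one_gt_d9
  have hexp_lt : exp 1 < 2.7182818286 := exp_one_lt_d9
  set B : ℝ := 4 * A^2 with hBdef
  have hB : 0 < B := by positivity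
  have hsqB : 0 < Real.sqrt B := Real.sqrt_pos.2 hB
  set c1 : ℝ := (1/2 - exp (-1)) / B with hc1def
  have hexpneg : exp (-1) < 1/2 := by
    rw [exp_neg]
    rw [inv_lt_comm₀ (exp_pos 1) (by norm_num)]
    linarith
  have hc1 : 0 < c1 := div_pos (by linarith) hB
  set c2 : ℝ := (11/4 - exp 1) / B with hc2def
  have hc2 : 0 < c2 := div_pos (by linarith) hB
  set t0 : ℝ := min (1/(16*σ^2)) (1/(σ*Real.sqrt B)) with ht0def
  have ht0 : 0 < t0 := lt_min (by positivity) (by positivity)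
  set c3 : ℝ := t0/16 with hc3def
  have hc3 : 0 < c3 := by positivity
  refine ⟨min c1 (min c2 c3), lt_min hc1 (lt_min hc2 hc3), ?_⟩
  set C : ℝ := min c1 (min c2 c3) with hCdef
  have hCc1 : C ≤ c1 := min_le_left _ _
  have hCc2 : C ≤ c2 := le_trans (min_le_right _ _) (min_le_left _ _)
  have hCc3 : C ≤ c3 := le_trans (min_le_right _ _) (min_le_right _ _)
  intro Ω _ P _ S _ G _ g hg hgbd hv m hm X hXm hXind hXlaw ε hεm hεind hεlaw hXε
  set v : ℝ := ∫ x, g x ^ 2 ∂G with hvdef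
  have hbd2 : ∀ x, g x ^ 2 ≤ B := by
    intro x
    have h1 := hgbd x
    have h2 := abs_nonneg (g x)
    nlinarith [sq_abs (g x)]
  have hm0 : (0:ℝ) < m := by
    have : (1:ℝ) ≤ m := by exact_mod_cast hm
    linarith
  have hmv : (0:ℝ) ≤ (m:ℝ) * v := by positivity
  set N : Measure ℝ := gaussianReal 0 (σ^2).toNNReal with hNdef
  set piG : Measure (Fin m → S) := Measure.pi fun _ => G with hpiG
  set piN : Measure (Fin m → ℝ) := Measure.pi fun _ => N with hpiN
  set μp : Measure ((Fin m → S) × (Fin m → ℝ)) := piG.prod piN with hμp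
  set Z : Ω → (Fin m → S) × (Fin m → ℝ) := fun ω => (fun i => X i ω, fun i => ε i ω) with hZdef
  have hXv : Measurable fun ω => (fun i => X i ω) := measurable_pi_lambda _ hXm
  have hεv : Measurable fun ω => (fun i => ε i ω) := measurable_pi_lambda _ hεm
  have hZ : Measurable Z := hXv.prodMk hεv
  have hmapZ : Measure.map Z P = μp := by
    rw [hμp, hpiG, hpiN, hZdef]
    rw [(indepFun_iff_map_prod_eq_prod_map_map hXv.aemeasurable hεv.aemeasurable).mp hXε,
      map_vec_pi P G m X hXm hXind hXlaw, map_vec_pi P N m ε hεm hεind hεlaw]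
  -- measurability
  have hQm : Measurable fun x : Fin m → S => ∑ i, g (x i) ^ 2 :=
    Finset.measurable_sum _ fun i _ => (hg.comp (measurable_pi_apply i)).pow_const 2
  have hQm' : Measurable fun p : (Fin m → S) × (Fin m → ℝ) => ∑ i, g (p.1 i) ^ 2 :=
    hQm.comp measurable_fst
  have hTm : Measurable fun p : (Fin m → S) × (Fin m → ℝ) => ∑ i, g (p.1 i) * p.2 i :=
    Finset.measurable_sum _ fun i _ =>
      ((hg.comp ((measurable_pi_apply i).comp measurable_fst)).mul
        ((measurable_pi_apply i).comp measurable_snd))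
  have hEm : Measurable fun p : (Fin m → S) × (Fin m → ℝ) => ∑ i, (p.2 i) ^ 2 :=
    Finset.measurable_sum _ fun i _ => ((measurable_pi_apply i).comp measurable_snd).pow_const 2
  -- Tail bound 1: lower tail of Q
  have h1 : μp {p | -((m:ℝ)*v/2) ≤ -(∑ i, g (p.1 i) ^ 2)} ≤ ENNReal.ofReal (exp (-C * m * v)) := by
    have hmar := exp_markov μp (hQm'.neg) (t := 1/B) (by positivity) (-((m:ℝ)*v/2))
    have hlin : ∫⁻ p : (Fin m → S) × (Fin m → ℝ),
        ENNReal.ofReal (exp ((1/B) * -(∑ i, g (p.1 i) ^ 2))) ∂μp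
        ≤ ENNReal.ofReal (exp (m * ((exp (-(1/B) * B) - 1) * (v/B)))) := by
      have heq : ∀ p : (Fin m → S) × (Fin m → ℝ),
          (1/B) * -(∑ i, g (p.1 i) ^ 2) = (-(1/B)) * ∑ i, g (p.1 i) ^ 2 := fun p => by ring
      simp_rw [heq]
      rw [hμp, lintegral_fst' piG piN (((hQm.const_mul _).exp).ennreal_ofReal)]
      exact mgf_sum_bound G hg hB hbd2 (-(1/B)) m
    refine le_trans (hmar.trans (mul_le_mul_right hlin _)) ?_
    rw [← ENNReal.ofReal_mul (exp_pos _).le, ← exp_add]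
    apply ENNReal.ofReal_le_ofReal
    apply exp_le_exp.2
    have hBval : -(1/B) * B = -1 := by field_simp
    rw [hBval]
    have heq2 : -(1/B * -((m:ℝ)*v/2)) + m * ((exp (-1) - 1) * (v/B)) = -c1 * ((m:ℝ)*v) := by
      rw [hc1def]; field_simp; ring
    rw [heq2]
    have : -c1 * ((m:ℝ)*v) ≤ -C * ((m:ℝ)*v) :=
      mul_le_mul_of_nonneg_right (neg_le_neg hCc1) hmv
    linarith [this]
  -- Tail bound 2: upper tail of Q
  have h2 : μp {p | 7*(m:ℝ)*v/4 ≤ ∑ i, g (p.1 i) ^ 2} ≤ ENNReal.ofReal (exp (-C * m * v)) := by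
    have hmar := exp_markov μp hQm' (t := 1/B) (by positivity) (7*(m:ℝ)*v/4)
    have hlin : ∫⁻ p : (Fin m → S) × (Fin m → ℝ),
        ENNReal.ofReal (exp ((1/B) * ∑ i, g (p.1 i) ^ 2)) ∂μp
        ≤ ENNReal.ofReal (exp (m * ((exp ((1/B) * B) - 1) * (v/B)))) := by
      rw [hμp, lintegral_fst' piG piN (((hQm.const_mul _).exp).ennreal_ofReal)]
      exact mgf_sum_bound G hg hB hbd2 (1/B) m
    refine le_trans (hmar.trans (mul_le_mul_right hlin _)) ?_
    rw [← ENNReal.ofReal_mul (exp_pos _).le, ← exp_add]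
    apply ENNReal.ofReal_le_ofReal
    apply exp_le_exp.2
    have hBval : (1/B) * B = 1 := by field_simp
    rw [hBval]
    have heq2 : -(1/B * (7*(m:ℝ)*v/4)) + m * ((exp 1 - 1) * (v/B)) = -((11/4 - exp 1)/B) * ((m:ℝ)*v) := by
      field_simp; ring
    rw [heq2, ← hc2def]
    have : -c2 * ((m:ℝ)*v) ≤ -C * ((m:ℝ)*v) :=
      mul_le_mul_of_nonneg_right (neg_le_neg hCc2) hmv
    linarith [this]
  -- chord facts for the cross term
  have ht0a : t0 ≤ 1/(16*σ^2) := min_le_left _ _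
  have ht0b : t0 ≤ 1/(σ*Real.sqrt B) := min_le_right _ _
  have hsq : t0^2 ≤ 1/(σ^2*B) := by
    have h1 : t0^2 ≤ (1/(σ*Real.sqrt B))^2 := by
      apply pow_le_pow_left₀ ht0.le ht0b
    calc t0^2 ≤ (1/(σ*Real.sqrt B))^2 := h1
      _ = 1/(σ^2*B) := by
          rw [div_pow, one_pow, mul_pow, Real.sq_sqrt hB.le]
  have hsB : σ^2*t0^2/2 * B ≤ 1/2 := by
    have h2 : σ^2*B*t0^2 ≤ σ^2*B*(1/(σ^2*B)) := by
      apply mul_le_mul_of_nonneg_left hsq (by positivity)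
    have h3 : σ^2*B*(1/(σ^2*B)) = 1 := by field_simp
    rw [h3] at h2
    linarith
  have hchordS : exp (σ^2*t0^2/2 * B) - 1 ≤ 2*(σ^2*t0^2/2 * B) := by
    have := exp_le_one_add_two_mul (x := σ^2*t0^2/2 * B) (by positivity) (by linarith)
    linarith
  have hcross_exp : m * ((exp (σ^2*t0^2/2 * B) - 1) * (v/B)) ≤ (m:ℝ) * (t0*v/16) := by
    apply mul_le_mul_of_nonneg_left _ (le_of_lt hm0)
    have hq : (exp (σ^2*t0^2/2 * B) - 1) * (v/B) ≤ 2*(σ^2*t0^2/2 * B)*(v/B) := by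
      apply mul_le_mul_of_nonneg_right hchordS (by positivity)
    have he : 2*(σ^2*t0^2/2 * B)*(v/B) = σ^2*t0^2*v := by field_simp
    have ht016 : σ^2*t0 ≤ 1/16 := by
      have := mul_le_mul_of_nonneg_left ht0a (le_of_lt (by positivity : (0:ℝ) < 16*σ^2))
      have h16 : (16*σ^2)*(1/(16*σ^2)) = 1 := by field_simp
      rw [h16] at this
      linarith
    have hmul := mul_le_mul_of_nonneg_right ht016 (by positivity : (0:ℝ) ≤ t0*v)
    nlinarith [hq, he, hmul]
  -- Tail bound 3: upper tail of T
  have h3 : μp {p | (m:ℝ)*v/8 ≤ ∑ i, g (p.1 i) * p.2 i} ≤ ENNReal.ofReal (exp (-C * m * v)) := by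
    have hmar := exp_markov μp hTm (t := t0) ht0.le ((m:ℝ)*v/8)
    have hlin := mgf_cross_bound G hσ hg hB hbd2 t0 m
    rw [← hpiG, ← hNdef, ← hpiN, ← hμp] at hlin
    refine le_trans (hmar.trans (mul_le_mul_right hlin _)) ?_
    rw [← ENNReal.ofReal_mul (exp_pos _).le, ← exp_add]
    apply ENNReal.ofReal_le_ofReal
    apply exp_le_exp.2
    have hfin : -(t0 * ((m:ℝ)*v/8)) + (m:ℝ)*(t0*v/16) = -c3 * ((m:ℝ)*v) := by
      rw [hc3def]; ring
    have : -c3 * ((m:ℝ)*v) ≤ -C * ((m:ℝ)*v) :=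
      mul_le_mul_of_nonneg_right (neg_le_neg hCc3) hmv
    linarith [hcross_exp, hfin, this]
  -- Tail bound 4: lower tail of T
  have h4 : μp {p | (m:ℝ)*v/8 ≤ -(∑ i, g (p.1 i) * p.2 i)} ≤ ENNReal.ofReal (exp (-C * m * v)) := by
    have hmar := exp_markov μp hTm.neg (t := t0) ht0.le ((m:ℝ)*v/8)
    have hlin0 := mgf_cross_bound G hσ hg hB hbd2 (-t0) m
    rw [← hpiG, ← hNdef, ← hpiN, ← hμp] at hlin0
    have heq : ∀ p : (Fin m → S) × (Fin m → ℝ),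
        t0 * -(∑ i, g (p.1 i) * p.2 i) = (-t0) * ∑ i, g (p.1 i) * p.2 i := fun p => by ring
    have hlin : ∫⁻ p : (Fin m → S) × (Fin m → ℝ),
        ENNReal.ofReal (exp (t0 * -(∑ i, g (p.1 i) * p.2 i))) ∂μp
        ≤ ENNReal.ofReal (exp (m * ((exp (σ^2*t0^2/2 * B) - 1) * (v/B)))) := by
      simp_rw [heq]
      have hneg : σ^2*(-t0)^2/2 = σ^2*t0^2/2 := by ring
      rw [← hneg]
      exact hlin0
    refine le_trans (hmar.trans (mul_le_mul_right hlin _)) ?_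
    rw [← ENNReal.ofReal_mul (exp_pos _).le, ← exp_add]
    apply ENNReal.ofReal_le_ofReal
    apply exp_le_exp.2
    have : -c3 * ((m:ℝ)*v) ≤ -C * ((m:ℝ)*v) :=
      mul_le_mul_of_nonneg_right (neg_le_neg hCc3) hmv
    have hfin : -(t0 * ((m:ℝ)*v/8)) + (m:ℝ)*(t0*v/16) = -c3 * ((m:ℝ)*v) := by
      rw [hc3def]; ring
    linarith [hcross_exp, hfin, this]
  -- the four bad sets
  set b1 : Set ((Fin m → S) × (Fin m → ℝ)) := {p | -((m:ℝ)*v/2) ≤ -(∑ i, g (p.1 i) ^ 2)} with hb1def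
  set b2 : Set ((Fin m → S) × (Fin m → ℝ)) := {p | 7*(m:ℝ)*v/4 ≤ ∑ i, g (p.1 i) ^ 2} with hb2def
  set b3 : Set ((Fin m → S) × (Fin m → ℝ)) := {p | (m:ℝ)*v/8 ≤ ∑ i, g (p.1 i) * p.2 i} with hb3def
  set b4 : Set ((Fin m → S) × (Fin m → ℝ)) := {p | (m:ℝ)*v/8 ≤ -(∑ i, g (p.1 i) * p.2 i)} with hb4def
  have hb1m : MeasurableSet b1 := measurableSet_le measurable_const hQm'.neg
  have hb2m : MeasurableSet b2 := measurableSet_le measurable_const hQm'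
  have hb3m : MeasurableSet b3 := measurableSet_le measurable_const hTm
  have hb4m : MeasurableSet b4 := measurableSet_le measurable_const hTm.neg
  have hbm : MeasurableSet (b1 ∪ b2 ∪ b3 ∪ b4) := ((hb1m.union hb2m).union hb3m).union hb4m
  have hub : μp (b1 ∪ b2 ∪ b3 ∪ b4) ≤ ENNReal.ofReal (8 * exp (-C * m * v)) := by
    have step : μp (b1 ∪ b2 ∪ b3 ∪ b4) ≤ μp b1 + μp b2 + μp b3 + μp b4 := by
      calc μp (b1 ∪ b2 ∪ b3 ∪ b4) ≤ μp (b1 ∪ b2 ∪ b3) + μp b4 := measure_union_le _ _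
        _ ≤ (μp (b1 ∪ b2) + μp b3) + μp b4 := add_le_add_left (measure_union_le _ _) _
        _ ≤ ((μp b1 + μp b2) + μp b3) + μp b4 :=
            add_le_add_left (add_le_add_left (measure_union_le _ _) _) _
    have step2 : μp b1 + μp b2 + μp b3 + μp b4
        ≤ ENNReal.ofReal (exp (-C * m * v)) + ENNReal.ofReal (exp (-C * m * v))
          + ENNReal.ofReal (exp (-C * m * v)) + ENNReal.ofReal (exp (-C * m * v)) :=
      add_le_add (add_le_add (add_le_add h1 h2) h3) h4
    have h4e : ENNReal.ofReal (exp (-C*m*v)) + ENNReal.ofReal (exp (-C*m*v))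
        + ENNReal.ofReal (exp (-C*m*v)) + ENNReal.ofReal (exp (-C*m*v))
        = ENNReal.ofReal (4 * exp (-C*m*v)) := by
      rw [← ENNReal.ofReal_add (exp_pos _).le (exp_pos _).le,
        ← ENNReal.ofReal_add (by positivity) (exp_pos _).le,
        ← ENNReal.ofReal_add (by positivity) (exp_pos _).le]
      ring_nf
    refine step.trans (step2.trans ?_)
    rw [h4e]
    apply ENNReal.ofReal_le_ofReal
    nlinarith [exp_pos (-C*(m:ℝ)*v)]
  -- target set on the product space
  set Tset : Set ((Fin m → S) × (Fin m → ℝ)) := {p |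
      (1/4) * v + (1/(m:ℝ)) * ∑ i, (p.2 i) ^ 2 ≤ (1/(m:ℝ)) * ∑ i, (g (p.1 i) - p.2 i) ^ 2 ∧
      (1/(m:ℝ)) * ∑ i, (g (p.1 i) - p.2 i) ^ 2 ≤ 2 * v + (1/(m:ℝ)) * ∑ i, (p.2 i) ^ 2} with hTdef
  have hgem : Measurable fun p : (Fin m → S) × (Fin m → ℝ) => ∑ i, (g (p.1 i) - p.2 i) ^ 2 :=
    Finset.measurable_sum _ fun i _ =>
      ((hg.comp ((measurable_pi_apply i).comp measurable_fst)).sub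
        ((measurable_pi_apply i).comp measurable_snd)).pow_const 2
  have hTsetm : MeasurableSet Tset := by
    rw [hTdef, Set.setOf_and]
    exact (measurableSet_le ((hEm.const_mul _).const_add _) (hgem.const_mul _)).inter
      (measurableSet_le (hgem.const_mul _) ((hEm.const_mul _).const_add _))
  have goodsub : (b1 ∪ b2 ∪ b3 ∪ b4)ᶜ ⊆ Tset := by
    intro p hp
    simp only [Set.mem_compl_iff, Set.mem_union, not_or, hb1def, hb2def, hb3def, hb4def,
      Set.mem_setOf_eq, not_le] at hp
    obtain ⟨⟨⟨hA1, hA2⟩, hA3⟩, hA4⟩ := hp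
    have hsplit : ∑ i, (g (p.1 i) - p.2 i) ^ 2
        = (∑ i, g (p.1 i) ^ 2) - 2*(∑ i, g (p.1 i) * p.2 i) + ∑ i, (p.2 i) ^ 2 := by
      rw [Finset.mul_sum, ← Finset.sum_sub_distrib, ← Finset.sum_add_distrib]
      apply Finset.sum_congr rfl
      intro i _
      ring
    have hminv : (0:ℝ) ≤ 1/(m:ℝ) := by positivity
    constructor
    · have key1 : (m:ℝ)*v/4 + ∑ i, (p.2 i) ^ 2
          ≤ (∑ i, g (p.1 i) ^ 2) - 2*(∑ i, g (p.1 i) * p.2 i) + ∑ i, (p.2 i) ^ 2 := by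
        linarith
      have mono := mul_le_mul_of_nonneg_left key1 hminv
      have e1 : (1/(m:ℝ)) * ((m:ℝ)*v/4 + ∑ i, (p.2 i) ^ 2)
          = (1/4) * v + (1/(m:ℝ)) * ∑ i, (p.2 i) ^ 2 := by
        field_simp
      rw [hsplit]
      linarith
    · have key2 : (∑ i, g (p.1 i) ^ 2) - 2*(∑ i, g (p.1 i) * p.2 i) + ∑ i, (p.2 i) ^ 2
          ≤ 2*(m:ℝ)*v + ∑ i, (p.2 i) ^ 2 := by
        linarith
      have mono := mul_le_mul_of_nonneg_left key2 hminv
      have e2 : (1/(m:ℝ)) * (2*(m:ℝ)*v + ∑ i, (p.2 i) ^ 2)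
          = 2 * v + (1/(m:ℝ)) * ∑ i, (p.2 i) ^ 2 := by
        field_simp
      rw [hsplit]
      linarith
  have hpre : {ω | (1/4) * v + (1/(m:ℝ)) * ∑ i, (ε i ω) ^ 2
        ≤ (1/(m:ℝ)) * ∑ i, (g (X i ω) - ε i ω) ^ 2 ∧
      (1/(m:ℝ)) * ∑ i, (g (X i ω) - ε i ω) ^ 2
        ≤ 2 * v + (1/(m:ℝ)) * ∑ i, (ε i ω) ^ 2} = Z ⁻¹' Tset := rfl
  calc 1 - ENNReal.ofReal (8 * exp (-C * m * v))
      ≤ 1 - μp (b1 ∪ b2 ∪ b3 ∪ b4) := tsub_le_tsub_left hub 1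
    _ = μp ((b1 ∪ b2 ∪ b3 ∪ b4)ᶜ) := (prob_compl_eq_one_sub hbm).symm
    _ ≤ μp Tset := measure_mono goodsub
    _ = P (Z ⁻¹' Tset) := by rw [← hmapZ, Measure.map_apply hZ hTsetm]
    _ = _ := by rw [← hpre]
end
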